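/- arXiv:2411.05598 — 5 statements merged into one kernel-verified Lean document; each statement's English description precedes it below -/
import Mathlib

section
/- If A and B are matrices over the natural numbers that are strong shift equivalent with lag m (i.e., there exist natural-number matrices R_1,...,R_m and S_1,...,S_m with A = R_1 S_1, S_i R_i = R_{i+1} S_{i+1} for i = 1,...,m-1, and S_m R_m = B), then A and B are shift equivalent with lag m (i.e., there exist natural-number matrices R and S with A^m = RS, SR = B^m, AR = RB, and BS = SA). -/
/-- Strong shift equivalence of square matrices over `ℕ` with lag `m`:
the `m`-step transitive closure of the elementary shift relation
(`A = R·S`, `S·R = B`). -/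
inductive MatSSE :
    ∀ (V : Type) (_ : Fintype V) (_ : DecidableEq V)
      (W : Type) (_ : Fintype W) (_ : DecidableEq W),
      Matrix V V ℕ → Matrix W W ℕ → ℕ → Prop
  | elementary {V : Type} {fV : Fintype V} {dV : DecidableEq V}
      {W : Type} {fW : Fintype W} {dW : DecidableEq W}
      (A : Matrix V V ℕ) (B : Matrix W W ℕ)
      (R : Matrix V W ℕ) (S : Matrix W V ℕ)
      (hA : A = R * S) (hB : S * R = B) :
      MatSSE V fV dV W fW dW A B 1
  | step {V : Type} {fV : Fintype V} {dV : DecidableEq V}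
      {W : Type} {fW : Fintype W} {dW : DecidableEq W}
      {U : Type} {fU : Fintype U} {dU : DecidableEq U}
      {A : Matrix V V ℕ} {B : Matrix W W ℕ} {C : Matrix U U ℕ} {m : ℕ}
      (h₁ : MatSSE V fV dV W fW dW A B m)
      (h₂ : MatSSE W fW dW U fU dU B C 1) :
      MatSSE V fV dV U fU dU A C (m + 1)

/-- Shift equivalence of square `ℕ`-matrices with lag `m`. -/
def MatSE {V W : Type} [Fintype V] [Fintype W]
    [DecidableEq V] [DecidableEq W]
    (A : Matrix V V ℕ) (B : Matrix W W ℕ) (m : ℕ) : Prop :=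
  ∃ (R : Matrix V W ℕ) (S : Matrix W V ℕ),
    A ^ m = R * S ∧ S * R = B ^ m ∧ A * R = R * B ∧ B * S = S * A

/-- A matrix is essential if it has no zero rows and no zero columns. -/
def MatEssential {V : Type} (A : Matrix V V ℕ) : Prop :=
  (∀ v, ∃ w, A v w ≠ 0) ∧ (∀ w, ∃ v, A v w ≠ 0)


lemma sandwich {W U : Type} [Fintype W] [Fintype U] [DecidableEq W] [DecidableEq U]
    (R : Matrix W U ℕ) (S : Matrix U W ℕ) (m : ℕ) :
    S * (R * S) ^ m * R = (S * R) ^ (m + 1) := by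
  induction m with
  | zero => simp [pow_succ]
  | succ n ih =>
    calc S * (R * S) ^ (n + 1) * R
        = (S * (R * S) ^ n * R) * (S * R) := by
          rw [pow_succ]; simp only [Matrix.mul_assoc]
      _ = (S * R) ^ (n + 1) * (S * R) := by rw [ih]
      _ = (S * R) ^ (n + 1 + 1) := by rw [← pow_succ]

lemma matSE_base {V W : Type} [Fintype V] [Fintype W] [DecidableEq V] [DecidableEq W]
    {A : Matrix V V ℕ} {B : Matrix W W ℕ} {R : Matrix V W ℕ} {S : Matrix W V ℕ}
    (hA : A = R * S) (hB : S * R = B) : MatSE A B 1 :=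
  ⟨R, S, by simpa using hA, by simpa using hB,
    by rw [hA, ← hB, Matrix.mul_assoc], by rw [← hB, hA, Matrix.mul_assoc]⟩

lemma matSE_step {V W U : Type} [Fintype V] [Fintype W] [Fintype U]
    [DecidableEq V] [DecidableEq W] [DecidableEq U]
    {A : Matrix V V ℕ} {B : Matrix W W ℕ} {C : Matrix U U ℕ} {m : ℕ}
    (h₁ : MatSE A B m) (h₂ : MatSE B C 1) : MatSE A C (m + 1) := by
  obtain ⟨R, S, h1, h2, h3, h4⟩ := h₁
  obtain ⟨R', S', hB, hC, _, _⟩ := h₂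
  rw [pow_one] at hB hC
  refine ⟨R * R', S' * S, ?_, ?_, ?_, ?_⟩
  · calc A ^ (m + 1) = A * A ^ m := by rw [pow_succ']
      _ = A * (R * S) := by rw [h1]
      _ = (A * R) * S := by rw [Matrix.mul_assoc]
      _ = R * B * S := by rw [h3]
      _ = R * (R' * S') * S := by rw [hB]
      _ = R * R' * (S' * S) := by simp only [Matrix.mul_assoc]
  · calc S' * S * (R * R') = S' * (S * R) * R' := by simp only [Matrix.mul_assoc]
      _ = S' * B ^ m * R' := by rw [h2]
      _ = S' * (R' * S') ^ m * R' := by rw [hB]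
      _ = (S' * R') ^ (m + 1) := sandwich R' S' m
      _ = C ^ (m + 1) := by rw [hC]
  · calc A * (R * R') = (A * R) * R' := by rw [Matrix.mul_assoc]
      _ = R * B * R' := by rw [h3]
      _ = R * (R' * S') * R' := by rw [hB]
      _ = R * R' * (S' * R') := by simp only [Matrix.mul_assoc]
      _ = R * R' * C := by rw [hC]
  · calc C * (S' * S) = (S' * R') * (S' * S) := by rw [hC]
      _ = S' * (R' * S') * S := by simp only [Matrix.mul_assoc]
      _ = S' * B * S := by rw [hB]
      _ = S' * (B * S) := by rw [Matrix.mul_assoc]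
      _ = S' * (S * A) := by rw [h4]
      _ = S' * S * A := by rw [Matrix.mul_assoc]

/-- strong shift equivalence with lag `m` implies shift equivalence
with lag `m`. -/
theorem stmt0 {V W : Type} [fV : Fintype V] [dV : DecidableEq V]
    [fW : Fintype W] [dW : DecidableEq W]
    (A : Matrix V V ℕ) (B : Matrix W W ℕ) (m : ℕ)
    (h : MatSSE V fV dV W fW dW A B m) :
    MatSE A B m := by
  induction h with
  | elementary A B R S hA hB => exact matSE_base hA hB
  | step h₁ h₂ ih₁ ih₂ => exact matSE_step ih₁ ih₂
end

section
/- Let A and B be essential square matrices over ℕ, and let (R, S, φ_R, φ_S, ψ_A, ψ_B) be a concrete shift between A and B with lag m. If the concrete shift is aligned, i.e., (ψ_A × id_A)(id_R × φ_S)(φ_R × id_S) = (id_A × ψ_A) and (ψ_B × id_B)(id_S × φ_R)(φ_S × id_R) = (id_B × ψ_B), then it is balanced, i.e., ψ_A^{-1} × ψ_A = (id_R × φ_S^{(m)})(φ_R^{(m)} × id_S) and ψ_B^{-1} × ψ_B = (id_S × φ_R^{(m)})(φ_S^{(m)} × id_R). -/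
/-! Edges of `ℕ`-matrices, fibered products of edge sets, paths, path isomorphisms,
concrete shifts, iterated path isomorphisms `φ^{(m)}`, and the aligned / balanced /
compatible conditions, following Carlsen–Dor-On–Eilers. -/

/-- The edge set `E_F = {(v, α, w) : 0 ≤ α < F_{v w}}` of a matrix `F` over `ℕ`. -/
def Edge {α β : Type} (F : Matrix α β ℕ) : Type :=
  {x : α × ℕ × β // x.2.1 < F x.1 x.2.2}

/-- Source of an edge. -/
def Edge.src {α β : Type} {F : Matrix α β ℕ} (e : Edge F) : α := e.1.1

/-- Range (target) of an edge. -/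
def Edge.tgt {α β : Type} {F : Matrix α β ℕ} (e : Edge F) : β := e.1.2.2

/-- Fibered product of two edge-like sets: composable pairs. -/
def FP {γ : Type} (X Y : Type) (t : X → γ) (s : Y → γ) : Type :=
  {p : X × Y // t p.1 = s p.2}

/-- Paths of length `m` in the graph of a square matrix `X`: composable `m`-tuples of edges. -/
def EPath {α : Type} (X : Matrix α α ℕ) (m : ℕ) : Type :=
  {p : Fin m → Edge X //
    ∀ (i : ℕ) (h : i + 1 < m), (p ⟨i + 1, h⟩).src = (p ⟨i, Nat.lt_of_succ_lt h⟩).tgt}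

/-- Source of a (nonempty) path. -/
def EPath.src {α : Type} {X : Matrix α α ℕ} {m : ℕ} (p : EPath X m) (h : 0 < m) : α :=
  ((p.1 ⟨0, h⟩)).src

/-- Range of a (nonempty) path. -/
def EPath.tgt {α : Type} {X : Matrix α α ℕ} {m : ℕ} (p : EPath X m) (h : 0 < m) : α :=
  ((p.1 ⟨m - 1, Nat.sub_lt h Nat.one_pos⟩)).tgt

/-- A concrete shift between `A` and `B` with lag `m`: matrices `R`, `S` over `ℕ` together
with path isomorphisms (source- and range-preserving bijections)
`φR : E_A × E_R → E_R × E_B`, `φS : E_B × E_S → E_S × E_A`,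
`ψA : E_R × E_S → E_A^m`, `ψB : E_S × E_R → E_B^m`. -/
structure ConcreteShift {V W : Type} (A : Matrix V V ℕ) (B : Matrix W W ℕ) (m : ℕ) where
  hm : 0 < m
  R : Matrix V W ℕ
  S : Matrix W V ℕ
  φR : FP (Edge A) (Edge R) Edge.tgt Edge.src ≃ FP (Edge R) (Edge B) Edge.tgt Edge.src
  φS : FP (Edge B) (Edge S) Edge.tgt Edge.src ≃ FP (Edge S) (Edge A) Edge.tgt Edge.src
  ψA : FP (Edge R) (Edge S) Edge.tgt Edge.src ≃ EPath A m
  ψB : FP (Edge S) (Edge R) Edge.tgt Edge.src ≃ EPath B m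
  φR_src : ∀ p, ((φR p).1.1).src = (p.1.1).src
  φR_tgt : ∀ p, ((φR p).1.2).tgt = (p.1.2).tgt
  φS_src : ∀ p, ((φS p).1.1).src = (p.1.1).src
  φS_tgt : ∀ p, ((φS p).1.2).tgt = (p.1.2).tgt
  ψA_src : ∀ p, (ψA p).src hm = (p.1.1).src
  ψA_tgt : ∀ p, (ψA p).tgt hm = (p.1.2).tgt
  ψB_src : ∀ p, (ψB p).src hm = (p.1.1).src
  ψB_tgt : ∀ p, (ψB p).tgt hm = (p.1.2).tgt

/-- The defining relation of the iterated path isomorphism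
`φ^{(m)} = (φ × id)(id × φ × id) ⋯ (id × φ) : E_X^m × E_M → E_M × E_Y^m`:
`IterRel φ m as r r' bs` holds iff `φ^{(m)}(as, r) = (r', bs)`, i.e. iff there is a chain
`ρ_m = r`, `ρ_0 = r'` with `φ(as_i, ρ_{i+1}) = (ρ_i, bs_i)` for all `i`. -/
def IterRel {α β : Type} {X : Matrix α α ℕ} {Y : Matrix β β ℕ} {M : Matrix α β ℕ}
    (φ : FP (Edge X) (Edge M) Edge.tgt Edge.src ≃ FP (Edge M) (Edge Y) Edge.tgt Edge.src)
    (m : ℕ) (as : EPath X m) (r r' : Edge M) (bs : EPath Y m) : Prop :=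
  ∃ ρ : Fin (m + 1) → Edge M, ρ (Fin.last m) = r ∧ ρ 0 = r' ∧
    ∀ i : Fin m, ∃ h : (as.1 i).tgt = (ρ i.succ).src,
      (φ ⟨(as.1 i, ρ i.succ), h⟩).1 = (ρ i.castSucc, bs.1 i)

variable {V W : Type} {A : Matrix V V ℕ} {B : Matrix W W ℕ} {m : ℕ}

/-- A concrete shift is aligned if
`(ψ_A × id_A)(id_R × φ_S)(φ_R × id_S) = (id_A × ψ_A)` and
`(ψ_B × id_B)(id_S × φ_R)(φ_S × id_R) = (id_B × ψ_B)`,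
under the canonical identifications `E_A^m × E_A ≅ E_A^{m+1} ≅ E_A × E_A^m`. -/
def ConcreteShift.Aligned (cs : ConcreteShift A B m) : Prop :=
  (∀ (a : Edge A) (r : Edge cs.R) (s : Edge cs.S)
      (h1 : a.tgt = r.src) (h2 : r.tgt = s.src)
      (r' : Edge cs.R) (b : Edge B) (_ : (cs.φR ⟨(a, r), h1⟩).1 = (r', b))
      (h3 : b.tgt = s.src)
      (s' : Edge cs.S) (a' : Edge A) (_ : (cs.φS ⟨(b, s), h3⟩).1 = (s', a'))
      (h4 : r'.tgt = s'.src),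
      (Fin.snoc (cs.ψA ⟨(r', s'), h4⟩).1 a' : Fin (m + 1) → Edge A) = (Fin.cons a (cs.ψA ⟨(r, s), h2⟩).1 : Fin (m + 1) → Edge A)) ∧
  (∀ (b : Edge B) (s : Edge cs.S) (r : Edge cs.R)
      (h1 : b.tgt = s.src) (h2 : s.tgt = r.src)
      (s' : Edge cs.S) (a' : Edge A) (_ : (cs.φS ⟨(b, s), h1⟩).1 = (s', a'))
      (h3 : a'.tgt = r.src)
      (r' : Edge cs.R) (b' : Edge B) (_ : (cs.φR ⟨(a', r), h3⟩).1 = (r', b'))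
      (h4 : s'.tgt = r'.src),
      (Fin.snoc (cs.ψB ⟨(s', r'), h4⟩).1 b' : Fin (m + 1) → Edge B) = (Fin.cons b (cs.ψB ⟨(s, r), h2⟩).1 : Fin (m + 1) → Edge B))

/-- A concrete shift is balanced if
`ψ_A⁻¹ × ψ_A = (id_R × φ_S^{(m)})(φ_R^{(m)} × id_S)` and
`ψ_B⁻¹ × ψ_B = (id_S × φ_R^{(m)})(φ_S^{(m)} × id_R)`. -/
def ConcreteShift.Balanced (cs : ConcreteShift A B m) : Prop :=
  (∀ (as : EPath A m) (r : Edge cs.R) (s : Edge cs.S)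
      (_ : as.tgt cs.hm = r.src) (h2 : r.tgt = s.src)
      (r₀ : Edge cs.R) (bs : EPath B m) (_ : IterRel cs.φR m as r r₀ bs)
      (s₀ : Edge cs.S) (as' : EPath A m) (_ : IterRel cs.φS m bs s s₀ as')
      (k : r₀.tgt = s₀.src),
      cs.ψA ⟨(r₀, s₀), k⟩ = as ∧ cs.ψA ⟨(r, s), h2⟩ = as') ∧
  (∀ (bs : EPath B m) (s : Edge cs.S) (r : Edge cs.R)
      (_ : bs.tgt cs.hm = s.src) (h2 : s.tgt = r.src)
      (s₀ : Edge cs.S) (as : EPath A m) (_ : IterRel cs.φS m bs s s₀ as)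
      (r₀ : Edge cs.R) (bs' : EPath B m) (_ : IterRel cs.φR m as r r₀ bs')
      (k : s₀.tgt = r₀.src),
      cs.ψB ⟨(s₀, r₀), k⟩ = bs ∧ cs.ψB ⟨(s, r), h2⟩ = bs')

/-- A concrete shift is compatible if
`φ_R^{(m)} = (id_R × ψ_B)(ψ_A⁻¹ × id_R)` and `φ_S^{(m)} = (id_S × ψ_A)(ψ_B⁻¹ × id_S)`. -/
def ConcreteShift.Compatible (cs : ConcreteShift A B m) : Prop :=
  (∀ (as : EPath A m) (r r' : Edge cs.R) (bs : EPath B m)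
      (_ : IterRel cs.φR m as r r' bs)
      (r₁ : Edge cs.R) (s₁ : Edge cs.S) (k : r₁.tgt = s₁.src)
      (_ : cs.ψA ⟨(r₁, s₁), k⟩ = as) (k2 : s₁.tgt = r.src),
      r' = r₁ ∧ bs = cs.ψB ⟨(s₁, r), k2⟩) ∧
  (∀ (bs : EPath B m) (s s' : Edge cs.S) (as : EPath A m)
      (_ : IterRel cs.φS m bs s s' as)
      (s₁ : Edge cs.S) (r₁ : Edge cs.R) (k : s₁.tgt = r₁.src)
      (_ : cs.ψB ⟨(s₁, r₁), k⟩ = bs) (k2 : r₁.tgt = s.src),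
      s' = s₁ ∧ as = cs.ψA ⟨(r₁, s), k2⟩)

lemma key_aligned {α β : Type} {X : Matrix α α ℕ} {Y : Matrix β β ℕ}
    {M : Matrix α β ℕ} {N : Matrix β α ℕ} {n : ℕ}
    (φ : FP (Edge X) (Edge M) Edge.tgt Edge.src ≃ FP (Edge M) (Edge Y) Edge.tgt Edge.src)
    (χ : FP (Edge Y) (Edge N) Edge.tgt Edge.src ≃ FP (Edge N) (Edge X) Edge.tgt Edge.src)
    (ψ : FP (Edge M) (Edge N) Edge.tgt Edge.src ≃ EPath X (n + 1))
    (χ_src : ∀ p, ((χ p).1.1).src = (p.1.1).src)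
    (align : ∀ (a : Edge X) (r : Edge M) (s : Edge N)
      (h1 : a.tgt = r.src) (h2 : r.tgt = s.src)
      (r' : Edge M) (b : Edge Y) (_ : (φ ⟨(a, r), h1⟩).1 = (r', b))
      (h3 : b.tgt = s.src)
      (s' : Edge N) (a' : Edge X) (_ : (χ ⟨(b, s), h3⟩).1 = (s', a'))
      (h4 : r'.tgt = s'.src),
      (Fin.snoc (ψ ⟨(r', s'), h4⟩).1 a' : Fin (n + 2) → Edge X)
        = (Fin.cons a (ψ ⟨(r, s), h2⟩).1 : Fin (n + 2) → Edge X))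
    (as : EPath X (n + 1)) (r : Edge M) (s : Edge N)
    (h2 : r.tgt = s.src)
    (r₀ : Edge M) (bs : EPath Y (n + 1)) (hR : IterRel φ (n + 1) as r r₀ bs)
    (s₀ : Edge N) (as' : EPath X (n + 1)) (hS : IterRel χ (n + 1) bs s s₀ as')
    (k : r₀.tgt = s₀.src) :
    ψ ⟨(r₀, s₀), k⟩ = as ∧ ψ ⟨(r, s), h2⟩ = as' := by
  obtain ⟨ρ, hρm, hρ0, hρ⟩ := hR
  obtain ⟨σ, hσm, hσ0, hσ⟩ := hS
  -- the composability of ρ i with σ i, by downward induction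
  have comp : ∀ i : Fin (n + 2), (ρ i).tgt = (σ i).src := by
    intro i
    induction i using Fin.reverseInduction with
    | last => rw [hρm, hσm]; exact h2
    | cast i ih =>
      obtain ⟨h1, e1⟩ := hρ i
      obtain ⟨h3, e3⟩ := hσ i
      have t1 := (φ ⟨(as.1 i, ρ i.succ), h1⟩).2
      rw [e1] at t1
      have t2 := χ_src ⟨(bs.1 i, σ i.succ), h3⟩
      rw [e3] at t2
      exact t1.trans t2.symm
  set p : Fin (n + 2) → (Fin (n + 1) → Edge X) :=
    fun i => (ψ ⟨(ρ i, σ i), comp i⟩).1 with hp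
  have rel : ∀ i : Fin (n + 1),
      (Fin.snoc (p i.castSucc) (as'.1 i) : Fin (n + 2) → Edge X)
        = (Fin.cons (as.1 i) (p i.succ) : Fin (n + 2) → Edge X) := by
    intro i
    obtain ⟨h1, e1⟩ := hρ i
    obtain ⟨h3, e3⟩ := hσ i
    exact align (as.1 i) (ρ i.succ) (σ i.succ) h1 (comp i.succ)
      (ρ i.castSucc) (bs.1 i) e1 h3 (σ i.castSucc) (as'.1 i) e3 (comp i.castSucc)
  have E1 : ∀ (i : ℕ) (hi : i < n + 1),
      p ⟨i, by omega⟩ ⟨0, by omega⟩ = as.1 ⟨i, hi⟩ := by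
    intro i hi
    have := congrFun (rel ⟨i, hi⟩) ⟨0, by omega⟩
    simpa [Fin.snoc, Fin.cons, Fin.castSucc, Fin.castAdd, Fin.castLE, Fin.castLT] using this
  have E2 : ∀ (i k : ℕ) (hi : i < n + 1) (hk : k < n),
      p ⟨i, by omega⟩ ⟨k + 1, by omega⟩ = p ⟨i + 1, by omega⟩ ⟨k, by omega⟩ := by
    intro i k hi hk
    have := congrFun (rel ⟨i, hi⟩) ⟨k + 1, by omega⟩
    simp only [Fin.snoc, Fin.cons, Fin.castSucc, Fin.castAdd, Fin.castLE, Fin.castLT,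
      Fin.succ] at this
    rw [dif_pos (by omega : k + 1 < n + 1)] at this
    simp only [cast_eq, Fin.cases_succ'] at this
    convert this using 3 <;> omega
  have E3 : ∀ (i : ℕ) (hi : i < n + 1),
      p ⟨i + 1, by omega⟩ ⟨n, by omega⟩ = as'.1 ⟨i, hi⟩ := by
    intro i hi
    have := congrFun (rel ⟨i, hi⟩) ⟨n + 1, by omega⟩
    simp only [Fin.snoc, Fin.cons, Fin.castSucc, Fin.castAdd, Fin.castLE, Fin.castLT,
      Fin.succ] at this
    rw [dif_neg (by omega : ¬ n + 1 < n + 1)] at this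
    exact this.symm
  have claimA : ∀ (k i : ℕ) (h : i + k ≤ n),
      p ⟨i, by omega⟩ ⟨k, by omega⟩ = as.1 ⟨i + k, by omega⟩ := by
    intro k
    induction k with
    | zero => intro i h; simpa using E1 i (by omega)
    | succ k ih =>
      intro i h
      rw [E2 i k (by omega) (by omega), ih (i + 1) (by omega),
        show (⟨i + 1 + k, by omega⟩ : Fin (n + 1)) = ⟨i + (k + 1), by omega⟩ from
          by simp only [Fin.mk.injEq]; omega]
  have claimB : ∀ (d j : ℕ) (h : j + d ≤ n),
      p ⟨j + 1 + d, by omega⟩ ⟨n - d, by omega⟩ = as'.1 ⟨j, by omega⟩ := by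
    intro d
    induction d with
    | zero => intro j h; simpa using E3 j (by omega)
    | succ d ih =>
      intro j h
      have ihd := ih j (by omega)
      rw [show (⟨n - d, by omega⟩ : Fin (n + 1)) = ⟨(n - (d + 1)) + 1, by omega⟩ from
          by simp only [Fin.mk.injEq]; omega,
        E2 (j + 1 + d) (n - (d + 1)) (by omega) (by omega)] at ihd
      rw [show (⟨j + 1 + (d + 1), by omega⟩ : Fin (n + 2)) = ⟨j + 1 + d + 1, by omega⟩ from
          by simp only [Fin.mk.injEq]; omega]
      exact ihd
  constructor
  · have harg : (⟨(r₀, s₀), k⟩ : FP (Edge M) (Edge N) Edge.tgt Edge.src)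
        = ⟨(ρ 0, σ 0), comp 0⟩ :=
      Subtype.ext (show (r₀, s₀) = (ρ 0, σ 0) by rw [hρ0, hσ0])
    rw [harg]
    apply Subtype.ext
    funext j
    have := claimA j.1 0 (by omega)
    simpa [Fin.eta] using this
  · have harg : (⟨(r, s), h2⟩ : FP (Edge M) (Edge N) Edge.tgt Edge.src)
        = ⟨(ρ (Fin.last (n + 1)), σ (Fin.last (n + 1))), comp (Fin.last (n + 1))⟩ :=
      Subtype.ext (show (r, s) = (ρ (Fin.last (n + 1)), σ (Fin.last (n + 1))) by rw [hρm, hσm])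
    rw [harg]
    apply Subtype.ext
    funext j
    have := claimB (n - j.1) j.1 (by omega)
    have e : (⟨j.1 + 1 + (n - j.1), by omega⟩ : Fin (n + 2)) = Fin.last (n + 1) := by
      ext; simp [Fin.last]; omega
    have e2 : (⟨n - (n - j.1), by omega⟩ : Fin (n + 1)) = j := by
      ext; simp; omega
    rw [e, e2] at this
    simpa using this

/-- for essential matrices, an aligned concrete shift is balanced. -/
theorem stmt2 {V W : Type} {A : Matrix V V ℕ} {B : Matrix W W ℕ} {m : ℕ}
    (hA : MatEssential A) (hB : MatEssential B) (cs : ConcreteShift A B m)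
    (h : cs.Aligned) : cs.Balanced := by
  obtain ⟨n, rfl⟩ : ∃ n, m = n + 1 := ⟨m - 1, by have := cs.hm; omega⟩
  constructor
  · intro as r s _ h2 r₀ bs hR s₀ as' hS k
    exact key_aligned cs.φR cs.φS cs.ψA cs.φS_src h.1 as r s h2 r₀ bs hR s₀ as' hS k
  · intro bs s r _ h2 s₀ as hS r₀ bs' hR k
    exact key_aligned cs.φS cs.φR cs.ψB cs.φR_src h.2 bs s r h2 s₀ as hS r₀ bs' hR k
end

section
/- Let A and B be essential square matrices over ℕ, and let (R, S, φ_R, φ_S, ψ_A, ψ_B) be a concrete shift between A and B with lag m. If the concrete shift is balanced, i.e., ψ_A^{-1} × ψ_A = (id_R × φ_S^{(m)})(φ_R^{(m)} × id_S) and ψ_B^{-1} × ψ_B = (id_S × φ_R^{(m)})(φ_S^{(m)} × id_R), then it is compatible, i.e., φ_R^{(m)} = (id_R × ψ_B)(ψ_A^{-1} × id_R) and φ_S^{(m)} = (id_S × ψ_A)(ψ_B^{-1} × id_S). -/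
variable {V W : Type} {A : Matrix V V ℕ} {B : Matrix W W ℕ} {m : ℕ}

section Aux

/-- Extensionality for fibered products. -/
lemma FP_ext {γ X Y : Type} {t : X → γ} {s : Y → γ} {p q : FP X Y t s}
    (h1 : p.1.1 = q.1.1) (h2 : p.1.2 = q.1.2) : p = q :=
  Subtype.ext (Prod.ext h1 h2)

lemma EPath.step {α : Type} {X : Matrix α α ℕ} {m : ℕ} (p : EPath X m) {i j : ℕ}
    (hi : i < m) (hj : j < m) (hij : j = i + 1) :
    (p.1 ⟨j, hj⟩).src = (p.1 ⟨i, hi⟩).tgt := by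
  subst hij; exact p.2 i hj

/-- From a vertex with a nonzero row entry, an edge starting there. -/
lemma exists_edge_src {α β : Type} {X : Matrix α β ℕ} (hX : ∀ v, ∃ w, X v w ≠ 0) (v : α) :
    ∃ e : Edge X, e.src = v := by
  obtain ⟨w, hw⟩ := hX v
  exact ⟨⟨(v, 0, w), Nat.pos_of_ne_zero hw⟩, rfl⟩

/-- A path of any positive length starting at any vertex, for a matrix with no zero rows. -/
lemma exists_path_src {α : Type} {X : Matrix α α ℕ} (hX : ∀ v, ∃ w, X v w ≠ 0)
    {m : ℕ} (hm : 0 < m) (v : α) : ∃ p : EPath X m, p.src hm = v := by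
  have f : ∀ u : α, {e : Edge X // e.src = u} := fun u =>
    ⟨(exists_edge_src hX u).choose, (exists_edge_src hX u).choose_spec⟩
  let g : ℕ → Edge X := fun n => Nat.rec (f v).1 (fun _ e => (f e.tgt).1) n
  refine ⟨⟨fun i => g i.1, ?_⟩, ?_⟩
  · intro i h
    exact (f (g i).tgt).2
  · exact (f v).2

section Iter

variable {α β : Type} {X : Matrix α α ℕ} {Y : Matrix β β ℕ} {M : Matrix α β ℕ}
  {φ : FP (Edge X) (Edge M) Edge.tgt Edge.src ≃ FP (Edge M) (Edge Y) Edge.tgt Edge.src}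
  {m : ℕ} {as : EPath X m} {e e' : Edge M} {bs : EPath Y m}

lemma iterRel_tgt_src (hIt : IterRel φ m as e e' bs) (hm : 0 < m) :
    as.tgt hm = e.src := by
  obtain ⟨ρ, hlast, h0, hrel⟩ := hIt
  obtain ⟨hc, -⟩ := hrel ⟨m - 1, Nat.sub_lt hm Nat.one_pos⟩
  have hsucc : (⟨m - 1, Nat.sub_lt hm Nat.one_pos⟩ : Fin m).succ = Fin.last m :=
    Fin.ext (by simp [Fin.val_succ, Fin.val_last]; omega)
  rw [hsucc, hlast] at hc
  exact hc

lemma iterRel_out (hIt : IterRel φ m as e e' bs) (hm : 0 < m) :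
    e'.tgt = bs.src hm := by
  obtain ⟨ρ, hlast, h0, hrel⟩ := hIt
  obtain ⟨hc, heq⟩ := hrel ⟨0, hm⟩
  have h2 := (φ ⟨(as.1 ⟨0, hm⟩, ρ (⟨0, hm⟩ : Fin m).succ), hc⟩).2
  rw [heq] at h2
  have h3 : (⟨0, hm⟩ : Fin m).castSucc = (0 : Fin (m + 1)) := rfl
  rw [h3, h0] at h2
  exact h2

lemma iterRel_bs_tgt (htgt : ∀ p, ((φ p).1.2).tgt = (p.1.2).tgt)
    (hIt : IterRel φ m as e e' bs) (hm : 0 < m) : bs.tgt hm = e.tgt := by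
  obtain ⟨ρ, hlast, h0, hrel⟩ := hIt
  obtain ⟨hc, heq⟩ := hrel ⟨m - 1, Nat.sub_lt hm Nat.one_pos⟩
  have h1 : bs.1 ⟨m - 1, Nat.sub_lt hm Nat.one_pos⟩
      = (φ ⟨(as.1 ⟨m - 1, Nat.sub_lt hm Nat.one_pos⟩,
          ρ (⟨m - 1, Nat.sub_lt hm Nat.one_pos⟩ : Fin m).succ), hc⟩).1.2 :=
    (congrArg Prod.snd heq).symm
  have hsucc : (⟨m - 1, Nat.sub_lt hm Nat.one_pos⟩ : Fin m).succ = Fin.last m :=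
    Fin.ext (by simp [Fin.val_succ, Fin.val_last]; omega)
  show (bs.1 ⟨m - 1, Nat.sub_lt hm Nat.one_pos⟩).tgt = e.tgt
  rw [h1]; refine (htgt _).trans ?_
  show (ρ (⟨m - 1, Nat.sub_lt hm Nat.one_pos⟩ : Fin m).succ).tgt = e.tgt
  rw [hsucc, hlast]

lemma iterRel_e'_src (hsrc : ∀ p, ((φ p).1.1).src = (p.1.1).src)
    (hIt : IterRel φ m as e e' bs) (hm : 0 < m) : e'.src = as.src hm := by
  obtain ⟨ρ, hlast, h0, hrel⟩ := hIt
  obtain ⟨hc, heq⟩ := hrel ⟨0, hm⟩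
  have h1 : e' = (φ ⟨(as.1 ⟨0, hm⟩, ρ (⟨0, hm⟩ : Fin m).succ), hc⟩).1.1 := by
    rw [← h0]
    have h3 : (⟨0, hm⟩ : Fin m).castSucc = (0 : Fin (m + 1)) := rfl
    rw [← h3]
    exact (congrArg Prod.fst heq).symm
  rw [h1]; refine (hsrc _).trans ?_
  rfl

/-- Forward existence for the iterated path isomorphism. -/
lemma iterRel_exists
    (φ : FP (Edge X) (Edge M) Edge.tgt Edge.src ≃ FP (Edge M) (Edge Y) Edge.tgt Edge.src)
    (hsrc : ∀ p, ((φ p).1.1).src = (p.1.1).src)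
    (htgt : ∀ p, ((φ p).1.2).tgt = (p.1.2).tgt)
    {m : ℕ} (hm : 0 < m) (as : EPath X m) (e : Edge M)
    (h : as.tgt hm = e.src) :
    ∃ (e' : Edge M) (bs : EPath Y m), IterRel φ m as e e' bs := by
  classical
  have key : ∀ k, k ≤ m → ∃ ρ : Fin (m + 1) → Edge M,
      ρ (Fin.last m) = e ∧
      ∀ i : Fin m, m - k ≤ i.1 →
        ∃ hc : (as.1 i).tgt = (ρ i.succ).src,
          (φ ⟨(as.1 i, ρ i.succ), hc⟩).1.1 = ρ i.castSucc := by
    intro k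
    induction k with
    | zero =>
      intro _
      exact ⟨fun _ => e, rfl, fun i hi => absurd hi (by omega)⟩
    | succ k ih =>
      intro hk1
      obtain ⟨ρ, hlast, hrel⟩ := ih (by omega)
      have hjlt : m - (k + 1) < m := by omega
      set j : Fin m := ⟨m - (k + 1), hjlt⟩ with hj
      have hcomp : (as.1 j).tgt = (ρ j.succ).src := by
        by_cases hk0 : k = 0
        · subst hk0
          have hsucc : j.succ = Fin.last m := Fin.ext (by simp [hj, Fin.val_succ, Fin.val_last]; omega)
          rw [hsucc, hlast]
          have hj1 : j = (⟨m - 1, Nat.sub_lt hm Nat.one_pos⟩ : Fin m) := Fin.ext (by simp [hj])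
          rw [hj1]
          exact h
        · have hmk : m - k < m := by omega
          obtain ⟨hc, heq⟩ := hrel ⟨m - k, hmk⟩ (le_refl _)
          have h1 : (⟨m - k, hmk⟩ : Fin m).castSucc = j.succ :=
            Fin.ext (by simp [hj, Fin.val_succ]; omega)
          have h2 : (ρ j.succ).src = (as.1 ⟨m - k, hmk⟩).src := by
            rw [← h1, ← heq]
            exact hsrc _
          rw [h2]
          exact (EPath.step as hjlt hmk (by omega)).symm
      set q := φ ⟨(as.1 j, ρ j.succ), hcomp⟩ with hq
      refine ⟨Function.update ρ j.castSucc q.1.1, ?_, ?_⟩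
      · rw [Function.update_of_ne (Fin.ne_of_val_ne (by simp [hj, Fin.val_last]; omega)), hlast]
      · intro i hi
        by_cases hij : i = j
        · subst hij
          have e1 : Function.update ρ j.castSucc q.1.1 j.succ = ρ j.succ :=
            Function.update_of_ne (Fin.ne_of_val_ne
              (by simp only [hj, Fin.succ_mk, Fin.castSucc_mk]; omega)) _ _
          have hc' : (as.1 j).tgt = ((Function.update ρ j.castSucc q.1.1) j.succ).src := by
            rw [e1]; exact hcomp
          refine ⟨hc', ?_⟩
          have harg : (⟨(as.1 j, Function.update ρ j.castSucc q.1.1 j.succ), hc'⟩ :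
              FP (Edge X) (Edge M) Edge.tgt Edge.src) = ⟨(as.1 j, ρ j.succ), hcomp⟩ :=
            FP_ext rfl e1
          rw [harg, Function.update_self]
        · have hvne : i.1 ≠ j.1 := fun hh => hij (Fin.ext hh)
          obtain ⟨hc, heq⟩ := hrel i (by simp [hj] at hvne ⊢; omega)
          have e2 : Function.update ρ j.castSucc q.1.1 i.succ = ρ i.succ :=
            Function.update_of_ne (Fin.ne_of_val_ne
              (by simp [hj, Fin.succ_mk, Fin.castSucc_mk] at hvne ⊢; omega)) _ _
          have e3 : Function.update ρ j.castSucc q.1.1 i.castSucc = ρ i.castSucc :=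
            Function.update_of_ne (Fin.ne_of_val_ne
              (by simp [hj, Fin.castSucc_mk] at hvne ⊢; omega)) _ _
          have hc' : (as.1 i).tgt = ((Function.update ρ j.castSucc q.1.1) i.succ).src := by
            rw [e2]; exact hc
          refine ⟨hc', ?_⟩
          have harg : (⟨(as.1 i, Function.update ρ j.castSucc q.1.1 i.succ), hc'⟩ :
              FP (Edge X) (Edge M) Edge.tgt Edge.src) = ⟨(as.1 i, ρ i.succ), hc⟩ :=
            FP_ext rfl e2
          rw [harg, heq, e3]
  obtain ⟨ρ, hlast, hrel⟩ := key m (le_refl m)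
  have hrel' : ∀ i : Fin m, ∃ hc : (as.1 i).tgt = (ρ i.succ).src,
      (φ ⟨(as.1 i, ρ i.succ), hc⟩).1.1 = ρ i.castSucc := fun i => hrel i (by omega)
  have bsf : Fin m → Edge Y := fun i => (φ ⟨(as.1 i, ρ i.succ), (hrel' i).choose⟩).1.2
  refine ⟨ρ 0, ⟨fun i => (φ ⟨(as.1 i, ρ i.succ), (hrel' i).choose⟩).1.2, ?_⟩,
    ρ, hlast, rfl, ?_⟩
  · intro i hh
    set i0 : Fin m := ⟨i, Nat.lt_of_succ_lt hh⟩ with hi0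
    set i1 : Fin m := ⟨i + 1, hh⟩ with hi1
    show Edge.src _ = Edge.tgt _
    have h1 : ((φ ⟨(as.1 i1, ρ i1.succ), (hrel' i1).choose⟩).1.2).src
        = ((φ ⟨(as.1 i1, ρ i1.succ), (hrel' i1).choose⟩).1.1).tgt :=
      ((φ ⟨(as.1 i1, ρ i1.succ), (hrel' i1).choose⟩).2).symm
    rw [h1, (hrel' i1).choose_spec]; refine Eq.trans ?_ (htgt _).symm
    have h3 : i1.castSucc = i0.succ := Fin.ext (by simp [hi0, hi1, Fin.val_succ])
    rw [h3]
  · intro i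
    exact ⟨(hrel' i).choose, Prod.ext ((hrel' i).choose_spec) rfl⟩

end Iter

/-- Swapping the roles of `A` and `B` in a concrete shift. -/
def ConcreteShift.swap {V W : Type} {A : Matrix V V ℕ} {B : Matrix W W ℕ} {m : ℕ}
    (cs : ConcreteShift A B m) : ConcreteShift B A m :=
  ⟨cs.hm, cs.S, cs.R, cs.φS, cs.φR, cs.ψB, cs.ψA, cs.φS_src, cs.φS_tgt, cs.φR_src,
    cs.φR_tgt, cs.ψB_src, cs.ψB_tgt, cs.ψA_src, cs.ψA_tgt⟩

/-- The main half of the theorem: a balanced concrete shift satisfies the first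
compatibility condition. -/
lemma balanced_main {V W : Type} {A : Matrix V V ℕ} {B : Matrix W W ℕ} {m : ℕ}
    (hA : MatEssential A) (hB : MatEssential B) (cs : ConcreteShift A B m)
    (h : cs.Balanced) :
    ∀ (as : EPath A m) (r r' : Edge cs.R) (bs : EPath B m)
      (_ : IterRel cs.φR m as r r' bs)
      (r₁ : Edge cs.R) (s₁ : Edge cs.S) (k : r₁.tgt = s₁.src)
      (_ : cs.ψA ⟨(r₁, s₁), k⟩ = as) (k2 : s₁.tgt = r.src),
      r' = r₁ ∧ bs = cs.ψB ⟨(s₁, r), k2⟩ := by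
  intro as r r' bs hIt r₁ s₁ k hψ k2
  have hSedge : ∀ w : W, ∃ s : Edge cs.S, s.src = w := by
    intro w
    obtain ⟨p, hp⟩ := exists_path_src hB.1 cs.hm w
    refine ⟨(cs.ψB.symm p).1.1, ?_⟩
    have hsp := cs.ψB_src (cs.ψB.symm p)
    rw [Equiv.apply_symm_apply] at hsp
    rw [← hsp, hp]
  have hRedge : ∀ v : V, ∃ t : Edge cs.R, t.src = v := by
    intro v
    obtain ⟨p, hp⟩ := exists_path_src hA.1 cs.hm v
    refine ⟨(cs.ψA.symm p).1.1, ?_⟩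
    have hsp := cs.ψA_src (cs.ψA.symm p)
    rw [Equiv.apply_symm_apply] at hsp
    rw [← hsp, hp]
  obtain ⟨s, hs⟩ := hSedge r.tgt
  have hbt : bs.tgt cs.hm = s.src := by
    rw [iterRel_bs_tgt cs.φR_tgt hIt cs.hm, hs]
  obtain ⟨s₀, as', hIt2⟩ := iterRel_exists cs.φS cs.φS_src cs.φS_tgt cs.hm bs s hbt
  have hcomp1 : as.tgt cs.hm = r.src := iterRel_tgt_src hIt cs.hm
  have hk0 : r'.tgt = s₀.src := by
    rw [iterRel_out hIt cs.hm, iterRel_e'_src cs.φS_src hIt2 cs.hm]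
  have hbal1 := h.1 as r s hcomp1 hs.symm r' bs hIt s₀ as' hIt2 hk0
  have hinj : (⟨(r', s₀), hk0⟩ : FP (Edge cs.R) (Edge cs.S) Edge.tgt Edge.src)
      = ⟨(r₁, s₁), k⟩ := cs.ψA.injective (by rw [hbal1.1, hψ])
  have hr' : r' = r₁ := congrArg (fun p => p.1.1) hinj
  have hs₀ : s₀ = s₁ := congrArg (fun p => p.1.2) hinj
  refine ⟨hr', ?_⟩
  obtain ⟨t, ht⟩ := hRedge s.tgt
  have has't : as'.tgt cs.hm = t.src := by
    rw [ht, ← hbal1.2]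
    exact cs.ψA_tgt _
  obtain ⟨t', cs', hIt3⟩ := iterRel_exists cs.φR cs.φR_src cs.φR_tgt cs.hm as' t has't
  obtain ⟨u, hu⟩ := hSedge t.tgt
  have hcst : cs'.tgt cs.hm = u.src := by
    rw [iterRel_bs_tgt cs.φR_tgt hIt3 cs.hm, hu]
  obtain ⟨u₀, as₃, hIt4⟩ := iterRel_exists cs.φS cs.φS_src cs.φS_tgt cs.hm cs' u hcst
  have hk3 : t'.tgt = u₀.src := by
    rw [iterRel_out hIt3 cs.hm, iterRel_e'_src cs.φS_src hIt4 cs.hm]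
  have hbal2 := h.1 as' t u has't hu.symm t' cs' hIt3 u₀ as₃ hIt4 hk3
  have hinj2 : (⟨(t', u₀), hk3⟩ : FP (Edge cs.R) (Edge cs.S) Edge.tgt Edge.src)
      = ⟨(r, s), hs.symm⟩ := cs.ψA.injective (by rw [hbal2.1, hbal1.2])
  have ht' : t' = r := congrArg (fun p => p.1.1) hinj2
  have hk4 : s₀.tgt = t'.src := by
    rw [iterRel_out hIt2 cs.hm, iterRel_e'_src cs.φR_src hIt3 cs.hm]
  have hbal3 := h.2 bs s t hbt ht.symm s₀ as' hIt2 t' cs' hIt3 hk4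
  rw [← hbal3.1]
  exact congrArg cs.ψB (FP_ext hs₀ ht')

end Aux

/-- for essential matrices, a balanced concrete shift is compatible. -/
theorem stmt3 {V W : Type} {A : Matrix V V ℕ} {B : Matrix W W ℕ} {m : ℕ}
    (hA : MatEssential A) (hB : MatEssential B) (cs : ConcreteShift A B m)
    (h : cs.Balanced) : cs.Compatible :=
  ⟨balanced_main hA hB cs h, balanced_main hB hA cs.swap ⟨h.2, h.1⟩⟩
end

section
/- Let Z be an A-B C*-correspondence (right Hilbert B-module with left action φ_Z : A → L(Z)) and for an ideal I ⊴ B define Z^{-1}(I) = {a ∈ A : φ_Z(a)Z ⊆ ZI}. Then for any family {I_j}_{j∈J} of closed ideals of B, Z^{-1}(⋂_j I_j) = ⋂_j Z^{-1}(I_j). -/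
/-! Basic framework: C*-correspondences over (possibly non-unital) C*-algebras,
interior tensor products (characterized by their universal properties),
closed ideals, and unitary isomorphisms of correspondences. -/

noncomputable section

/-- A (non-degenerate) A–B C*-correspondence: a right Hilbert `B`-module `X`
together with a left action of `A` by adjointable operators. -/
structure Corr (A B : Type) [NonUnitalCStarAlgebra A] [NonUnitalCStarAlgebra B] : Type 1 where
  X : Type
  [grp : NormedAddCommGroup X]
  [nsc : NormedSpace ℂ X]
  [cpl : CompleteSpace X]
  /-- the right action of `B` -/
  sm : X → B → X
  /-- the `B`-valued inner product (linear in the second variable) -/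
  ip : X → X → B
  /-- the left action of `A` -/
  φ : A → X → X
  sm_add : ∀ x y b, sm (x + y) b = sm x b + sm y b
  sm_add' : ∀ x b c, sm x (b + c) = sm x b + sm x c
  sm_mul : ∀ x b c, sm (sm x b) c = sm x (b * c)
  sm_smul : ∀ (t : ℂ) x b, sm (t • x) b = t • sm x b
  sm_smul' : ∀ (t : ℂ) x b, sm x (t • b) = t • sm x b
  ip_add : ∀ x y z, ip x (y + z) = ip x y + ip x z
  ip_smul : ∀ (t : ℂ) x y, ip x (t • y) = t • ip x y
  ip_sm : ∀ x y b, ip x (sm y b) = ip x y * b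
  ip_star : ∀ x y, star (ip x y) = ip y x
  ip_pos : ∀ x, ∃ b, ip x x = star b * b
  ip_norm : ∀ x, ‖x‖ ^ 2 = ‖ip x x‖
  φ_add : ∀ a x y, φ a (x + y) = φ a x + φ a y
  φ_add' : ∀ a b x, φ (a + b) x = φ a x + φ b x
  φ_smul : ∀ a (t : ℂ) x, φ a (t • x) = t • φ a x
  φ_smul' : ∀ (t : ℂ) a x, φ (t • a) x = t • φ a x
  φ_mul : ∀ a b x, φ (a * b) x = φ a (φ b x)
  φ_adj : ∀ a x y, ip (φ a x) y = ip x (φ (star a) y)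
  /-- non-degeneracy of the left action -/
  nondeg : closure (Submodule.span ℂ {z | ∃ a x, z = φ a x} : Set X) = Set.univ

attribute [instance] Corr.grp Corr.nsc Corr.cpl

variable {A B C : Type} [NonUnitalCStarAlgebra A] [NonUnitalCStarAlgebra B]
  [NonUnitalCStarAlgebra C]

/-- `Z.setR I` is the closed submodule `Z·I` of `Z`. -/
def Corr.setR (Z : Corr A B) (I : Set B) : Set Z.X :=
  closure (Submodule.span ℂ {x | ∃ ξ b, b ∈ I ∧ x = Z.sm ξ b} : Set Z.X)

/-- `Z.setL I` is the closed subspace `I·Z` of `Z`. -/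
def Corr.setL (Z : Corr A B) (I : Set A) : Set Z.X :=
  closure (Submodule.span ℂ {x | ∃ a ξ, a ∈ I ∧ x = Z.φ a ξ} : Set Z.X)

/-- `Z⁻¹(I) = {a ∈ A : φ_Z(a)Z ⊆ ZI}`. -/
def Corr.inv (Z : Corr A B) (I : Set B) : Set A := {a | ∀ ξ, Z.φ a ξ ∈ Z.setR I}

/-- The closed ideal of `B` generated by the inner products of `Z`. -/
def Corr.ipSet (Z : Corr A B) : Set B :=
  closure (Submodule.span ℂ {b | ∃ x y, b = Z.ip x y} : Set B)

/-- A generalized compact operator on the underlying Hilbert module of a correspondence: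
one that is approximable in operator norm by finite sums of "rank one" operators
`θ_{ξ,η} : z ↦ ξ·⟨η,z⟩`. -/
def Corr.IsCompactOp (Z : Corr A B) (f : Z.X → Z.X) : Prop :=
  ∀ ε > (0 : ℝ), ∃ (n : ℕ) (ξ η : Fin n → Z.X),
    ∀ z, ‖f z - ∑ i, Z.sm (ξ i) (Z.ip (η i) z)‖ ≤ ε * ‖z‖

/-- A closed (two-sided, automatically self-adjoint) ideal of a C*-algebra, as a set. -/
structure IsCIdeal {B : Type} [NonUnitalCStarAlgebra B] (I : Set B) : Prop where
  isClosed : IsClosed I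
  zero_mem : (0 : B) ∈ I
  add_mem : ∀ x y, x ∈ I → y ∈ I → x + y ∈ I
  smul_mem : ∀ (t : ℂ) x, x ∈ I → t • x ∈ I
  mul_left_mem : ∀ b x, x ∈ I → b * x ∈ I
  mul_right_mem : ∀ b x, x ∈ I → x * b ∈ I

/-- `t : Z₁ × Z₂ → T` exhibits `T` as the interior tensor product `Z₁ ⊗_B Z₂`. -/
structure IsTensor (Z₁ : Corr A B) (Z₂ : Corr B C) (T : Corr A C)
    (t : Z₁.X → Z₂.X → T.X) : Prop where
  add_left : ∀ x x' y, t (x + x') y = t x y + t x' y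
  add_right : ∀ x y y', t x (y + y') = t x y + t x y'
  smul_left : ∀ (c : ℂ) x y, t (c • x) y = c • t x y
  balanced : ∀ x b y, t (Z₁.sm x b) y = t x (Z₂.φ b y)
  sm_right : ∀ x y c, t x (Z₂.sm y c) = T.sm (t x y) c
  act_left : ∀ a x y, T.φ a (t x y) = t (Z₁.φ a x) y
  inner : ∀ x x' y y', T.ip (t x y) (t x' y') = Z₂.ip y (Z₂.φ (Z₁.ip x x') y')
  dense : closure (Submodule.span ℂ {z | ∃ x y, z = t x y} : Set T.X) = Set.univ

/-- `X ≅ Z₁ ⊗ Z₂` (unitary isomorphism with the interior tensor product). -/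
def IsTensorProd (Z₁ : Corr A B) (Z₂ : Corr B C) (T : Corr A C) : Prop :=
  ∃ t, IsTensor Z₁ Z₂ T t

/-- A unitary isomorphism of A–B correspondences. -/
def CorrIso (Z W : Corr A B) : Prop :=
  ∃ u : Z.X → W.X, Function.Surjective u ∧ (∀ x y, u (x + y) = u x + u y) ∧
    (∀ (c : ℂ) x, u (c • x) = c • u x) ∧ (∀ a x, u (Z.φ a x) = W.φ a (u x)) ∧
    (∀ x b, u (Z.sm x b) = W.sm (u x) b) ∧ (∀ x y, W.ip (u x) (u y) = Z.ip x y)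

end

noncomputable section Helpers

open Complex

variable {A B : Type} [NonUnitalCStarAlgebra A] [NonUnitalCStarAlgebra B]

namespace Corr

variable (Z : Corr A B)

lemma ip_zero_right (x : Z.X) : Z.ip x 0 = 0 := by
  have h := Z.ip_add x 0 0
  rw [add_zero] at h
  nth_rewrite 1 [← add_zero (Z.ip x 0)] at h
  exact (add_left_cancel h).symm

lemma ip_zero_left (x : Z.X) : Z.ip 0 x = 0 := by
  rw [← Z.ip_star, Z.ip_zero_right, star_zero]

lemma ip_add_left (x y w : Z.X) : Z.ip (x + y) w = Z.ip x w + Z.ip y w := by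
  rw [← Z.ip_star, Z.ip_add, star_add, Z.ip_star, Z.ip_star]

lemma ip_smul_left (t : ℂ) (x y : Z.X) :
    Z.ip (t • x) y = (starRingEnd ℂ t) • Z.ip x y := by
  rw [← Z.ip_star, Z.ip_smul, star_smul, Z.ip_star, RCLike.star_def]

lemma ip_sub_right (x y w : Z.X) : Z.ip x (y - w) = Z.ip x y - Z.ip x w := by
  have : y - w = y + (-1 : ℂ) • w := by
    rw [neg_one_smul, sub_eq_add_neg]
  rw [this, Z.ip_add, Z.ip_smul, neg_one_smul, sub_eq_add_neg]

lemma ip_sub_left (x y w : Z.X) : Z.ip (x - y) w = Z.ip x w - Z.ip y w := by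
  rw [← Z.ip_star, Z.ip_sub_right, star_sub, Z.ip_star, Z.ip_star]

lemma ip_sm_left (x y : Z.X) (b : B) :
    Z.ip (Z.sm x b) y = star b * Z.ip x y := by
  rw [← Z.ip_star, Z.ip_sm, star_mul, Z.ip_star]

lemma ip_expand (x y : Z.X) (c : ℂ) :
    Z.ip (x + c • y) (x + c • y) = Z.ip x x + c • Z.ip x y +
      (starRingEnd ℂ c) • Z.ip y x + (c * starRingEnd ℂ c) • Z.ip y y := by
  rw [Z.ip_add, Z.ip_smul, Z.ip_add_left, Z.ip_add_left, Z.ip_smul_left,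
    Z.ip_smul_left, smul_add, smul_smul]
  abel

lemma ip_polar (x y : Z.X) :
    (4 : ℂ) • Z.ip x y =
      Z.ip (x + y) (x + y) - Z.ip (x - y) (x - y)
        - I • Z.ip (x + I • y) (x + I • y) + I • Z.ip (x - I • y) (x - I • y) := by
  have h1 := Z.ip_expand x y 1
  have h2 := Z.ip_expand x y (-1)
  have h3 := Z.ip_expand x y I
  have h4 := Z.ip_expand x y (-I)
  have e2 : x + (-1 : ℂ) • y = x - y := by
    rw [neg_one_smul, sub_eq_add_neg]
  have e4 : x + (-I : ℂ) • y = x - I • y := by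
    rw [neg_smul, sub_eq_add_neg]
  rw [e2] at h2
  rw [e4] at h4
  simp only [one_smul, map_one, map_neg, Complex.conj_I, neg_one_smul, one_mul,
    neg_mul, neg_neg, Complex.I_mul_I, mul_one, neg_smul] at h1 h2 h3 h4
  rw [h1, h2, h3, h4]
  simp only [smul_add, smul_smul, smul_neg, mul_neg, Complex.I_mul_I, neg_neg,
    one_smul, neg_smul, neg_mul]
  module

lemma ip_norm_le_of_eq (x y : Z.X) : ‖Z.ip x y‖ ≤ (‖x‖ + ‖y‖) ^ 2 := by
  have key := Z.ip_polar x y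
  have hnorm : ∀ u : Z.X, ‖u‖ ≤ ‖x‖ + ‖y‖ → ‖Z.ip u u‖ ≤ (‖x‖ + ‖y‖) ^ 2 := by
    intro u hu
    rw [← Z.ip_norm u]
    have h0 : (0:ℝ) ≤ ‖u‖ := norm_nonneg u
    nlinarith
  have h1 : ‖Z.ip (x + y) (x + y)‖ ≤ (‖x‖ + ‖y‖) ^ 2 := hnorm _ (norm_add_le x y)
  have h2 : ‖Z.ip (x - y) (x - y)‖ ≤ (‖x‖ + ‖y‖) ^ 2 := hnorm _ (norm_sub_le x y)
  have h3 : ‖Z.ip (x + I • y) (x + I • y)‖ ≤ (‖x‖ + ‖y‖) ^ 2 := by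
    refine hnorm _ ?_
    calc ‖x + I • y‖ ≤ ‖x‖ + ‖I • y‖ := norm_add_le _ _
    _ = ‖x‖ + ‖y‖ := by rw [norm_smul, Complex.norm_I, one_mul]
  have h4 : ‖Z.ip (x - I • y) (x - I • y)‖ ≤ (‖x‖ + ‖y‖) ^ 2 := by
    refine hnorm _ ?_
    calc ‖x - I • y‖ ≤ ‖x‖ + ‖I • y‖ := norm_sub_le _ _
    _ = ‖x‖ + ‖y‖ := by rw [norm_smul, Complex.norm_I, one_mul]
  have h5 : ‖(4 : ℂ) • Z.ip x y‖ = 4 * ‖Z.ip x y‖ := by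
    rw [norm_smul]
    norm_num
  have h6 : ‖(4 : ℂ) • Z.ip x y‖ ≤ 4 * (‖x‖ + ‖y‖) ^ 2 := by
    rw [key]
    have hI3 : ‖I • Z.ip (x + I • y) (x + I • y)‖ ≤ (‖x‖ + ‖y‖) ^ 2 := by
      rw [norm_smul, Complex.norm_I, one_mul]; exact h3
    have hI4 : ‖I • Z.ip (x - I • y) (x - I • y)‖ ≤ (‖x‖ + ‖y‖) ^ 2 := by
      rw [norm_smul, Complex.norm_I, one_mul]; exact h4
    calc ‖_ - _ - _ + _‖ ≤ ‖_ - _ - _‖ + ‖_‖ := norm_add_le _ _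
      _ ≤ (‖_ - _‖ + ‖_‖) + ‖_‖ := by gcongr; exact norm_sub_le _ _
      _ ≤ ((‖_‖ + ‖_‖) + ‖_‖) + ‖_‖ := by gcongr; exact norm_sub_le _ _
      _ ≤ 4 * (‖x‖ + ‖y‖) ^ 2 := by
        rw [show (4:ℝ) * (‖x‖ + ‖y‖)^2 = (((‖x‖ + ‖y‖)^2 + (‖x‖ + ‖y‖)^2)
          + (‖x‖ + ‖y‖)^2) + (‖x‖ + ‖y‖)^2 by ring]
        gcongr
  rw [h5] at h6
  linarith

lemma ip_norm_le (x y : Z.X) : ‖Z.ip x y‖ ≤ 4 * ‖x‖ * ‖y‖ := by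
  rcases eq_or_ne x 0 with rfl | hx
  · simp [Z.ip_zero_left]
  rcases eq_or_ne y 0 with rfl | hy
  · simp [Z.ip_zero_right]
  have hx' : (0:ℝ) < ‖x‖ := norm_pos_iff.mpr hx
  have hy' : (0:ℝ) < ‖y‖ := norm_pos_iff.mpr hy
  set t : ℝ := Real.sqrt (‖y‖ / ‖x‖) with ht_def
  have ht : 0 < t := Real.sqrt_pos.mpr (by positivity)
  have ht2 : t ^ 2 = ‖y‖ / ‖x‖ := Real.sq_sqrt (by positivity)
  have hxy : Z.ip x y = Z.ip ((t : ℂ) • x) (((t⁻¹ : ℝ) : ℂ) • y) := by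
    rw [Z.ip_smul, Z.ip_smul_left, smul_smul, Complex.conj_ofReal,
      ← Complex.ofReal_mul, inv_mul_cancel₀ ht.ne', Complex.ofReal_one, one_smul]
  have hb := Z.ip_norm_le_of_eq ((t : ℂ) • x) (((t⁻¹ : ℝ) : ℂ) • y)
  rw [← hxy] at hb
  rw [norm_smul, norm_smul] at hb
  have hnt : ‖(t : ℂ)‖ = t := by
    rw [Complex.norm_real, Real.norm_eq_abs, abs_of_pos ht]
  have hnt' : ‖((t⁻¹ : ℝ) : ℂ)‖ = t⁻¹ := by
    rw [Complex.norm_real, Real.norm_eq_abs, abs_of_pos (by positivity)]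
  rw [hnt, hnt'] at hb
  have key : (t * ‖x‖ + t⁻¹ * ‖y‖) ^ 2 = 4 * ‖x‖ * ‖y‖ := by
    have h1 : (t * ‖x‖) ^ 2 = ‖x‖ * ‖y‖ := by
      rw [mul_pow, ht2]; field_simp
    have h2 : (t⁻¹ * ‖y‖) ^ 2 = ‖x‖ * ‖y‖ := by
      rw [mul_pow, inv_pow, ht2]; field_simp
    have h3 : (t * ‖x‖) * (t⁻¹ * ‖y‖) = ‖x‖ * ‖y‖ := by
      field_simp
    nlinarith
  linarith [hb, key.le]

lemma ip_continuous_right (w : Z.X) : Continuous (fun y => Z.ip w y) := by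
  refine LipschitzWith.continuous (K := ⟨4 * ‖w‖, by positivity⟩) ?_
  refine LipschitzWith.of_dist_le_mul fun y₁ y₂ => ?_
  rw [dist_eq_norm, dist_eq_norm, ← Z.ip_sub_right]
  exact Z.ip_norm_le w (y₁ - y₂)

lemma ip_mem_of_mem_setR {I : Set B} (hI : IsCIdeal I) (w : Z.X) {z : Z.X}
    (hz : z ∈ Z.setR I) : Z.ip w z ∈ I := by
  have hT : IsClosed {y : Z.X | Z.ip w y ∈ I} :=
    hI.isClosed.preimage (Z.ip_continuous_right w)
  have hsub : (Submodule.span ℂ {x | ∃ ξ b, b ∈ I ∧ x = Z.sm ξ b} : Set Z.X) ⊆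
      {y : Z.X | Z.ip w y ∈ I} := by
    intro y hy
    induction hy using Submodule.span_induction with
    | mem x hx =>
      obtain ⟨ξ, b, hb, rfl⟩ := hx
      simpa [Z.ip_sm] using hI.mul_left_mem (Z.ip w ξ) b hb
    | zero => simpa [Z.ip_zero_right] using hI.zero_mem
    | add x y _ _ hx hy => simpa [Z.ip_add] using hI.add_mem _ _ hx hy
    | smul t x _ hx => simpa [Z.ip_smul] using hI.smul_mem t _ hx
  exact closure_minimal hsub hT hz

lemma real_bound (m t : ℝ) (hm : 0 < m) :
    |t / (1 + m ^ 2 * t ^ 2) ^ 2| ≤ 1 / (2 * m) := by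
  have hd : (0:ℝ) < 1 + m ^ 2 * t ^ 2 := by positivity
  rw [abs_div, abs_of_pos (by positivity : (0:ℝ) < (1 + m ^ 2 * t ^ 2) ^ 2)]
  rw [div_le_div_iff₀ (by positivity) (by positivity)]
  have h1 : 2 * m * |t| ≤ 1 + m ^ 2 * t ^ 2 := by
    nlinarith [sq_nonneg (m * |t| - 1), abs_nonneg t, _root_.sq_abs t]
  have h2 : (1:ℝ) ≤ 1 + m ^ 2 * t ^ 2 := by nlinarith [sq_nonneg (m * t)]
  nlinarith [abs_nonneg t]

lemma cfc_approx (a : B) (ha : IsSelfAdjoint a) (m : ℝ) (hm : 0 < m) :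
    ∃ e : B, star (a * e) = a * e ∧
      ‖a - (a * e) * a - (a * (a * e) - (a * e) * (a * (a * e)))‖ ≤ 1 / (2 * m) := by
  have hden : ∀ t : ℝ, 0 < 1 + m ^ 2 * t ^ 2 := fun t => by positivity
  set h' : ℝ → ℝ := fun t => m ^ 2 * t / (1 + m ^ 2 * t ^ 2) with hh'_def
  have hcont : Continuous h' := by
    apply Continuous.div (by fun_prop) (by fun_prop) (fun t => (hden t).ne')
  have hh'0 : h' 0 = 0 := by simp [hh'_def]
  refine ⟨cfcₙ h' a, ?_, ?_⟩
  · have hb : cfcₙ (fun t => t * h' t) a = a * cfcₙ h' a := by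
      rw [cfcₙ_mul (fun t : ℝ => t) h' a (by fun_prop) rfl hcont.continuousOn hh'0,
        cfcₙ_id' ℝ a ha]
    rw [← hb]
    exact (cfcₙ_predicate (fun t => t * h' t) a).star_eq
  · set F : ℝ → ℝ := fun t => t * h' t with hF_def
    have hFcont : Continuous F := continuous_id.mul hcont
    have hF0 : F 0 = 0 := by simp [hF_def, hh'0]
    have hb : cfcₙ F a = a * cfcₙ h' a := by
      rw [hF_def, cfcₙ_mul (fun t : ℝ => t) h' a (by fun_prop) rfl hcont.continuousOn hh'0,
        cfcₙ_id' ℝ a ha]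
    have hba : cfcₙ (fun t => F t * t) a = (a * cfcₙ h' a) * a := by
      rw [cfcₙ_mul F (fun t : ℝ => t) a hFcont.continuousOn hF0 (by fun_prop) rfl,
        cfcₙ_id' ℝ a ha, hb]
    have hab : cfcₙ (fun t => t * F t) a = a * (a * cfcₙ h' a) := by
      rw [cfcₙ_mul (fun t : ℝ => t) F a (by fun_prop) rfl hFcont.continuousOn hF0,
        cfcₙ_id' ℝ a ha, hb]
    have hbab : cfcₙ (fun t => F t * (t * F t)) a = (a * cfcₙ h' a) * (a * (a * cfcₙ h' a)) := by
      rw [cfcₙ_mul F (fun t : ℝ => t * F t) a hFcont.continuousOn hF0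
        (by exact (continuous_id.mul hFcont).continuousOn) (by simp [hF0]), hb, hab]
    have key : cfcₙ (fun t => t - F t * t - (t * F t - F t * (t * F t))) a =
        a - (a * cfcₙ h' a) * a - (a * (a * cfcₙ h' a) - (a * cfcₙ h' a) * (a * (a * cfcₙ h' a))) := by
      rw [cfcₙ_sub (fun t => t - F t * t) (fun t => t * F t - F t * (t * F t)) a
        (by exact (continuous_id.sub (hFcont.mul continuous_id)).continuousOn)
        (by simp [hF0])
        (by exact ((continuous_id.mul hFcont).sub
          (hFcont.mul (continuous_id.mul hFcont))).continuousOn)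
        (by simp [hF0])]
      rw [cfcₙ_sub (fun t : ℝ => t) (fun t => F t * t) a (by fun_prop) rfl
        (by exact (hFcont.mul continuous_id).continuousOn) (by simp [hF0])]
      rw [cfcₙ_sub (fun t => t * F t) (fun t => F t * (t * F t)) a
        (by exact (continuous_id.mul hFcont).continuousOn) (by simp [hF0])
        (by exact (hFcont.mul (continuous_id.mul hFcont)).continuousOn)
        (by simp [hF0])]
      rw [cfcₙ_id' ℝ a ha, hab, hba, hbab]
    rw [← key]
    apply norm_cfcₙ_le
    intro t _
    have hGt : t - F t * t - (t * F t - F t * (t * F t)) = t / (1 + m ^ 2 * t ^ 2) ^ 2 := by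
      rw [hF_def, hh'_def]
      simp only
      have := (hden t).ne'
      field_simp
      ring
    rw [Real.norm_eq_abs, hGt]
    exact real_bound m t hm

/-- The key approximation lemma: if `⟨z,z⟩·B ⊆ I`, then `z ∈ Z·I`. -/
lemma mem_setR_of_forall_mul {I : Set B} {z : Z.X}
    (h : ∀ c : B, Z.ip z z * c ∈ I) : z ∈ Z.setR I := by
  obtain ⟨c₀, hc₀⟩ := Z.ip_pos z
  have ha : IsSelfAdjoint (Z.ip z z) := by
    rw [hc₀]; exact IsSelfAdjoint.star_mul_self c₀
  rw [Corr.setR, Metric.mem_closure_iff]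
  intro ε hε
  obtain ⟨n, hn⟩ := exists_nat_gt (1 / (2 * ε ^ 2))
  obtain ⟨m, hm_def⟩ : ∃ x : ℝ, x = (n : ℝ) + 1 := ⟨_, rfl⟩
  have hm : 0 < m := by rw [hm_def]; positivity
  have hm1 : 1 / (2 * ε ^ 2) < m := by rw [hm_def]; linarith
  have hmε : 1 / (2 * m) < ε ^ 2 := by
    rw [div_lt_iff₀ (by positivity)]
    rw [div_lt_iff₀ (by positivity)] at hm1
    nlinarith
  obtain ⟨e, hstar, hnorm⟩ := cfc_approx (Z.ip z z) ha m hm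
  obtain ⟨b, hb_def⟩ : ∃ x : B, x = Z.ip z z * e := ⟨_, rfl⟩
  have hbI : b ∈ I := hb_def ▸ h e
  have hbstar : star b = b := by rw [hb_def]; exact hstar
  have hip : Z.ip (z - Z.sm z b) (z - Z.sm z b) =
      Z.ip z z - b * Z.ip z z - (Z.ip z z * b - b * (Z.ip z z * b)) := by
    rw [Z.ip_sub_right, Z.ip_sub_left, Z.ip_sub_left, Z.ip_sm,
      Z.ip_sm_left, Z.ip_sm_left, Z.ip_sm, hbstar]
  have hnw : ‖z - Z.sm z b‖ ^ 2 ≤ 1 / (2 * m) := by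
    rw [Z.ip_norm, hip, hb_def]
    exact hnorm
  refine ⟨Z.sm z b, ?_, ?_⟩
  · exact Submodule.subset_span ⟨z, b, hbI, rfl⟩
  · rw [dist_eq_norm]
    nlinarith [norm_nonneg (z - Z.sm z b), hnw, hmε, hε]

lemma setR_mono {I J : Set B} (hIJ : I ⊆ J) : Z.setR I ⊆ Z.setR J := by
  apply closure_mono
  apply Submodule.span_mono
  rintro x ⟨ξ, b, hb, rfl⟩
  exact ⟨ξ, b, hIJ hb, rfl⟩

end Corr

end Helpers

/-- `Z⁻¹(⋂ⱼ Iⱼ) = ⋂ⱼ Z⁻¹(Iⱼ)` for a family of closed ideals of `B`. -/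
theorem stmt5 {A B : Type} [NonUnitalCStarAlgebra A] [NonUnitalCStarAlgebra B]
    (Z : Corr A B) {J : Type} (I : J → Set B) (hI : ∀ j, IsCIdeal (I j)) :
    Z.inv (⋂ j, I j) = ⋂ j, Z.inv (I j) := by
  ext a
  simp only [Corr.inv, Set.mem_iInter, Set.mem_setOf_eq]
  constructor
  · intro h j ξ
    exact Z.setR_mono (Set.iInter_subset I j) (h ξ)
  · intro h ξ
    apply Z.mem_setR_of_forall_mul
    intro c
    exact Set.mem_iInter.mpr fun j =>
      (hI j).mul_right_mem c _ (Z.ip_mem_of_mem_setR (hI j) _ (h j ξ))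
end

section
/- Let X be a right Hilbert B-module, φ : A → L(X) a *-homomorphism, I ⊴ A and J ⊴ B closed ideals with φ(I)X ⊆ XJ. Then there is a well-defined *-homomorphism φ_{I,J} : A/I → L(X_J) satisfying φ_{I,J}([a]_I)([ξ]_J) = [φ(a)ξ]_J for a ∈ A, ξ ∈ X, where X_J = X/XJ is the quotient Hilbert A/I–B/J module. Moreover, if φ maps A into K(X), then φ_{I,J} maps A/I into K(X_J). -/
/-! Right Hilbert C*-modules over a (possibly non-unital) C*-algebra. -/

noncomputable section

/-- A right Hilbert `B`-module. -/
structure HilbMod (B : Type) [NonUnitalCStarAlgebra B] : Type 1 where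
  X : Type
  [grp : NormedAddCommGroup X]
  [nsc : NormedSpace ℂ X]
  [cpl : CompleteSpace X]
  sm : X → B → X
  ip : X → X → B
  sm_add : ∀ x y b, sm (x + y) b = sm x b + sm y b
  sm_add' : ∀ x b c, sm x (b + c) = sm x b + sm x c
  sm_mul : ∀ x b c, sm (sm x b) c = sm x (b * c)
  sm_smul : ∀ (t : ℂ) x b, sm (t • x) b = t • sm x b
  sm_smul' : ∀ (t : ℂ) x b, sm x (t • b) = t • sm x b
  ip_add : ∀ x y z, ip x (y + z) = ip x y + ip x z
  ip_smul : ∀ (t : ℂ) x y, ip x (t • y) = t • ip x y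
  ip_sm : ∀ x y b, ip x (sm y b) = ip x y * b
  ip_star : ∀ x y, star (ip x y) = ip y x
  ip_pos : ∀ x, ∃ b, ip x x = star b * b
  ip_norm : ∀ x, ‖x‖ ^ 2 = ‖ip x x‖

attribute [instance] HilbMod.grp HilbMod.nsc HilbMod.cpl

variable {B : Type} [NonUnitalCStarAlgebra B]

/-- `Z.setR J` is the closed submodule `Z·J`. -/
def HilbMod.setR (Z : HilbMod B) (J : Set B) : Set Z.X :=
  closure (Submodule.span ℂ {x | ∃ ξ b, b ∈ J ∧ x = Z.sm ξ b} : Set Z.X)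

/-- A generalized compact operator on a Hilbert module: approximable in operator norm by
finite sums of rank-one operators `θ_{ξ,η} : z ↦ ξ·⟨η,z⟩`. -/
def HilbMod.IsCompactOp (Z : HilbMod B) (f : Z.X → Z.X) : Prop :=
  ∀ ε > (0 : ℝ), ∃ (n : ℕ) (ξ η : Fin n → Z.X),
    ∀ z, ‖f z - ∑ i, Z.sm (ξ i) (Z.ip (η i) z)‖ ≤ ε * ‖z‖

/-- `π : B → B'` realizes `B'` as the quotient C*-algebra `B/I`. -/
structure IsQuotAlg {B B' : Type} [NonUnitalCStarAlgebra B] [NonUnitalCStarAlgebra B']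
    (π : B → B') (I : Set B) : Prop where
  surj : Function.Surjective π
  map_add : ∀ a b, π (a + b) = π a + π b
  map_mul : ∀ a b, π (a * b) = π a * π b
  map_star : ∀ a, π (star a) = star (π a)
  map_smul : ∀ (t : ℂ) a, π (t • a) = t • π a
  ker : ∀ a, π a = 0 ↔ a ∈ I

namespace HilbMod

variable (Z : HilbMod B)

lemma ip_zero (x : Z.X) : Z.ip x 0 = 0 := by
  simpa using Z.ip_smul 0 x 0

lemma zero_ip (x : Z.X) : Z.ip 0 x = 0 := by
  rw [← Z.ip_star x 0, Z.ip_zero, star_zero]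

lemma add_ip (x y z : Z.X) : Z.ip (x + y) z = Z.ip x z + Z.ip y z := by
  rw [← Z.ip_star z (x + y), Z.ip_add, star_add, Z.ip_star, Z.ip_star]

lemma smul_ip (t : ℂ) (x y : Z.X) : Z.ip (t • x) y = star t • Z.ip x y := by
  rw [← Z.ip_star y (t • x), Z.ip_smul, star_smul, Z.ip_star]

lemma ip_sub (x y z : Z.X) : Z.ip x (y - z) = Z.ip x y - Z.ip x z := by
  have hn : Z.ip x (-z) = - Z.ip x z := by
    simpa using Z.ip_smul (-1) x z
  rw [sub_eq_add_neg, Z.ip_add, hn, sub_eq_add_neg]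

lemma eq_zero_of_ip_self (x : Z.X) (h : Z.ip x x = 0) : x = 0 := by
  have h2 : ‖x‖ ^ 2 = 0 := by rw [Z.ip_norm, h, norm_zero]
  exact norm_eq_zero.mp (pow_eq_zero_iff (n := 2) (by norm_num) |>.mp h2)

lemma ip_norm_le_sq (x y : Z.X) : ‖Z.ip x y‖ ≤ (‖x‖ + ‖y‖) ^ 2 := by
  have expand : ∀ c : ℂ, Z.ip (x + c • y) (x + c • y) =
      Z.ip x x + c • Z.ip x y + star c • Z.ip y x + (star c * c) • Z.ip y y := by
    intro c
    simp only [Z.ip_add, Z.add_ip, Z.ip_smul, Z.smul_ip, smul_smul]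
    module
  have key4 : (4 : ℂ) • Z.ip x y =
      Z.ip (x + (1:ℂ) • y) (x + (1:ℂ) • y)
      - Complex.I • Z.ip (x + Complex.I • y) (x + Complex.I • y)
      - Z.ip (x + (-1:ℂ) • y) (x + (-1:ℂ) • y)
      + Complex.I • Z.ip (x + (-Complex.I) • y) (x + (-Complex.I) • y) := by
    rw [expand 1, expand Complex.I, expand (-1), expand (-Complex.I)]
    simp only [star_one, star_neg, Complex.star_def, Complex.conj_I, map_one, map_neg,
      one_smul, one_mul, mul_one, neg_smul, neg_neg, smul_add, smul_smul, smul_neg]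
    match_scalars <;> simp [Complex.I_mul_I] <;> ring
  have hb : ∀ c : ℂ, ‖c‖ = 1 →
      ‖Z.ip (x + c • y) (x + c • y)‖ ≤ (‖x‖ + ‖y‖) ^ 2 := by
    intro c hc
    rw [← Z.ip_norm]
    have h1 : ‖x + c • y‖ ≤ ‖x‖ + ‖y‖ :=
      (norm_add_le _ _).trans (by rw [norm_smul, hc, one_mul])
    exact pow_le_pow_left₀ (norm_nonneg _) h1 2
  have e1 := hb 1 (by norm_num)
  have e2 := hb Complex.I (by simp)
  have e3 := hb (-1) (by norm_num)
  have e4 := hb (-Complex.I) (by simp)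
  have h4 : ‖(4 : ℂ) • Z.ip x y‖ = 4 * ‖Z.ip x y‖ := by
    rw [norm_smul]; norm_num
  set E1 := Z.ip (x + (1:ℂ) • y) (x + (1:ℂ) • y)
  set E2 := Z.ip (x + Complex.I • y) (x + Complex.I • y)
  set E3 := Z.ip (x + (-1:ℂ) • y) (x + (-1:ℂ) • y)
  set E4 := Z.ip (x + (-Complex.I) • y) (x + (-Complex.I) • y)
  have tri : ‖E1 - Complex.I • E2 - E3 + Complex.I • E4‖ ≤ ‖E1‖ + ‖E2‖ + ‖E3‖ + ‖E4‖ := by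
    have n2 : ‖Complex.I • E2‖ = ‖E2‖ := by rw [norm_smul]; simp
    have n4 : ‖Complex.I • E4‖ = ‖E4‖ := by rw [norm_smul]; simp
    calc ‖E1 - Complex.I • E2 - E3 + Complex.I • E4‖
        ≤ ‖E1 - Complex.I • E2 - E3‖ + ‖Complex.I • E4‖ := norm_add_le _ _
      _ ≤ (‖E1 - Complex.I • E2‖ + ‖E3‖) + ‖Complex.I • E4‖ :=
          add_le_add (norm_sub_le _ _) le_rfl
      _ ≤ ((‖E1‖ + ‖Complex.I • E2‖) + ‖E3‖) + ‖Complex.I • E4‖ :=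
          add_le_add (add_le_add (norm_sub_le _ _) le_rfl) le_rfl
      _ = ‖E1‖ + ‖E2‖ + ‖E3‖ + ‖E4‖ := by rw [n2, n4]
  have hfin : 4 * ‖Z.ip x y‖ ≤ 4 * (‖x‖ + ‖y‖) ^ 2 := by
    rw [← h4, key4]
    calc ‖E1 - Complex.I • E2 - E3 + Complex.I • E4‖
        ≤ ‖E1‖ + ‖E2‖ + ‖E3‖ + ‖E4‖ := tri
      _ ≤ 4 * (‖x‖ + ‖y‖) ^ 2 := by linarith
  linarith

lemma ip_bound (x y : Z.X) : ‖Z.ip x y‖ ≤ (‖x‖ + 1) ^ 2 * ‖y‖ := by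
  rcases eq_or_ne y 0 with rfl | hy
  · simp [Z.ip_zero]
  · have hy' : (0:ℝ) < ‖y‖ := norm_pos_iff.mpr hy
    have hrw : y = (‖y‖ : ℂ) • ((‖y‖ : ℂ)⁻¹ • y) := by
      rw [smul_smul, mul_inv_cancel₀ (by exact_mod_cast hy'.ne'), one_smul]
    have h1 : ‖(‖y‖ : ℂ)⁻¹ • y‖ = 1 := by
      rw [norm_smul, norm_inv]
      simp [Complex.norm_real, abs_of_pos hy', inv_mul_cancel₀ hy'.ne']
    calc ‖Z.ip x y‖ = ‖(‖y‖ : ℂ) • Z.ip x ((‖y‖ : ℂ)⁻¹ • y)‖ := by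
          conv_lhs => rw [hrw, Z.ip_smul]
      _ = ‖y‖ * ‖Z.ip x ((‖y‖ : ℂ)⁻¹ • y)‖ := by
          rw [norm_smul]; simp [Complex.norm_real, abs_of_pos hy']
      _ ≤ ‖y‖ * (‖x‖ + 1) ^ 2 := by
          have := Z.ip_norm_le_sq x ((‖y‖ : ℂ)⁻¹ • y)
          rw [h1] at this
          exact mul_le_mul_of_nonneg_left this hy'.le
      _ = (‖x‖ + 1) ^ 2 * ‖y‖ := mul_comm _ _

lemma setR_ip_mem (J : Set B) (hJ : IsCIdeal J) (η ζ : Z.X) (hζ : ζ ∈ Z.setR J) :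
    Z.ip η ζ ∈ J := by
  have hcont : Continuous fun z => Z.ip η z := by
    refine (LipschitzWith.of_dist_le_mul (K := ⟨(‖η‖ + 1) ^ 2, by positivity⟩) ?_).continuous
    intro z z'
    rw [dist_eq_norm, dist_eq_norm, ← Z.ip_sub]
    exact Z.ip_bound η (z - z')
  have hsub : (Submodule.span ℂ {x | ∃ ξ b, b ∈ J ∧ x = Z.sm ξ b} : Set Z.X) ⊆
      {z : Z.X | Z.ip η z ∈ J} := by
    intro z hz
    replace hz : z ∈ Submodule.span ℂ {x | ∃ ξ b, b ∈ J ∧ x = Z.sm ξ b} := hz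
    induction hz using Submodule.span_induction with
    | mem w h => obtain ⟨ξ, b, hb, rfl⟩ := h; show Z.ip η _ ∈ J; rw [Z.ip_sm]; exact hJ.mul_left_mem _ _ hb
    | zero => show Z.ip η 0 ∈ J; rw [Z.ip_zero]; exact hJ.zero_mem
    | add u v hu hv pu pv => show Z.ip η (u + v) ∈ J; rw [Z.ip_add]; exact hJ.add_mem _ _ pu pv
    | smul t u hu pu => show Z.ip η (t • u) ∈ J; rw [Z.ip_smul]; exact hJ.smul_mem t _ pu
  exact closure_minimal hsub (hJ.isClosed.preimage hcont) hζ

end HilbMod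

/-- if `φ : A → L(X)` is a *-homomorphism with `φ(I)X ⊆ XJ`, then it descends to
a *-homomorphism `φ_{I,J} : A/I → L(X_J)` with `φ_{I,J}([a]_I)([ξ]_J) = [φ(a)ξ]_J`; and if `φ`
takes values in `K(X)`, then `φ_{I,J}` takes values in `K(X_J)`.

Here the quotient C*-algebra `A/I` is represented by a surjective *-homomorphism `πA : A → A'`
with kernel `I`, and the quotient Hilbert `B/J`-module `X_J = X/XJ` by a Hilbert module `Q`
over `B'` (with `πB : B → B'` realizing `B/J`) together with the quotient map `q : X → Q`. -/
theorem stmt8 {A A' B B' : Type} [NonUnitalCStarAlgebra A] [NonUnitalCStarAlgebra A']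
    [NonUnitalCStarAlgebra B] [NonUnitalCStarAlgebra B']
    (X : HilbMod B) (φ : A → X.X → X.X)
    (hφ_add : ∀ a x y, φ a (x + y) = φ a x + φ a y)
    (hφ_add' : ∀ a b x, φ (a + b) x = φ a x + φ b x)
    (hφ_smul : ∀ a (t : ℂ) x, φ a (t • x) = t • φ a x)
    (hφ_smul' : ∀ (t : ℂ) a x, φ (t • a) x = t • φ a x)
    (hφ_mul : ∀ a b x, φ (a * b) x = φ a (φ b x))
    (hφ_adj : ∀ a x y, X.ip (φ a x) y = X.ip x (φ (star a) y))
    (I : Set A) (hI : IsCIdeal I) (J : Set B) (hJ : IsCIdeal J)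
    (hIJ : ∀ a ∈ I, ∀ ξ, φ a ξ ∈ X.setR J)
    (πA : A → A') (hπA : IsQuotAlg πA I) (πB : B → B') (hπB : IsQuotAlg πB J)
    (Q : HilbMod B') (q : X.X → Q.X)
    (hq_surj : Function.Surjective q)
    (hq_add : ∀ ξ η, q (ξ + η) = q ξ + q η)
    (hq_smul : ∀ (t : ℂ) ξ, q (t • ξ) = t • q ξ)
    (hq_ker : ∀ ξ, q ξ = 0 ↔ ξ ∈ X.setR J)
    (hq_ip : ∀ ξ η, Q.ip (q ξ) (q η) = πB (X.ip ξ η))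
    (hq_sm : ∀ ξ b, Q.sm (q ξ) (πB b) = q (X.sm ξ b)) :
    ∃ Φ : A' → Q.X → Q.X,
      (∀ a ξ, Φ (πA a) (q ξ) = q (φ a ξ)) ∧
      (∀ a' x y, Φ a' (x + y) = Φ a' x + Φ a' y) ∧
      (∀ a' b' x, Φ (a' + b') x = Φ a' x + Φ b' x) ∧
      (∀ a' (t : ℂ) x, Φ a' (t • x) = t • Φ a' x) ∧
      (∀ a' b' x, Φ (a' * b') x = Φ a' (Φ b' x)) ∧
      (∀ a' x y, Q.ip (Φ a' x) y = Q.ip x (Φ (star a') y)) ∧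
      ((∀ a, X.IsCompactOp (φ a)) → ∀ a', Q.IsCompactOp (Φ a')) := by
  classical
  -- basic arithmetic lemmas for `φ`, `q`, `πA`
  have phi_sub : ∀ a (x y : X.X), φ a (x - y) = φ a x - φ a y := by
    intro a x y
    have hneg : φ a (-y) = - φ a y := by simpa using hφ_smul a (-1) y
    rw [sub_eq_add_neg, hφ_add, hneg, sub_eq_add_neg]
  have phi_sub' : ∀ a b (x : X.X), φ (a - b) x = φ a x - φ b x := by
    intro a b x
    have hneg : φ (-b) x = - φ b x := by simpa using hφ_smul' (-1) b x
    rw [sub_eq_add_neg, hφ_add', hneg, sub_eq_add_neg]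
  have q_sub : ∀ ξ η, q (ξ - η) = q ξ - q η := by
    intro ξ η
    have hneg : q (-η) = - q η := by simpa using hq_smul (-1) η
    rw [sub_eq_add_neg, hq_add, hneg, sub_eq_add_neg]
  have piA_sub : ∀ a b, πA (a - b) = πA a - πA b := by
    intro a b
    have hneg : πA (-b) = - πA b := by simpa using hπA.map_smul (-1) b
    rw [sub_eq_add_neg, hπA.map_add, hneg, sub_eq_add_neg]
  -- `πB` is contractive, being a star homomorphism of C*-algebras
  let πB' : B →⋆ₙₐ[ℂ] B' :=
    { toFun := πB
      map_smul' := hπB.map_smul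
      map_zero' := by simpa using hπB.map_smul 0 0
      map_add' := hπB.map_add
      map_mul' := hπB.map_mul
      map_star' := hπB.map_star }
  have piB_norm : ∀ b, ‖πB b‖ ≤ ‖b‖ := fun b => NonUnitalStarAlgHom.norm_apply_le πB' b
  have q_norm : ∀ z, ‖q z‖ ≤ ‖z‖ := by
    intro z
    have h2 : ‖q z‖ ^ 2 ≤ ‖z‖ ^ 2 := by
      rw [Q.ip_norm, X.ip_norm, hq_ip]
      exact piB_norm _
    nlinarith [norm_nonneg (q z), norm_nonneg z]
  -- bundle `q` as a continuous linear map
  let qlin : X.X →ₗ[ℂ] Q.X :=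
    { toFun := q, map_add' := hq_add, map_smul' := hq_smul }
  let qL : X.X →L[ℂ] Q.X := qlin.mkContinuous 1 (fun z => by rw [one_mul]; exact q_norm z)
  have q_sum : ∀ {n : ℕ} (f : Fin n → X.X), q (∑ i, f i) = ∑ i, q (f i) := by
    intro n f
    exact map_sum qlin f Finset.univ
  -- `q ∘ φ a` kills `X·J`
  have claim0 : ∀ a ζ, ζ ∈ X.setR J → q (φ a ζ) = 0 := by
    intro a ζ hζ
    obtain ⟨y, hy⟩ := hq_surj (q (φ a ζ))
    have hyy : X.ip y (φ a ζ) = X.ip (φ (star a) y) ζ := by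
      calc X.ip y (φ a ζ) = star (X.ip (φ a ζ) y) := (X.ip_star _ _).symm
        _ = star (X.ip ζ (φ (star a) y)) := by rw [hφ_adj]
        _ = X.ip (φ (star a) y) ζ := X.ip_star _ _
    have h : Q.ip (q y) (q (φ a ζ)) = 0 := by
      rw [hq_ip, hyy, (hπB.ker _).mpr (X.setR_ip_mem J hJ _ _ hζ)]
    rw [hy] at h
    exact Q.eq_zero_of_ip_self _ h
  -- well-definedness
  have welldef : ∀ a₁ a₂ ξ₁ ξ₂, πA a₁ = πA a₂ → q ξ₁ = q ξ₂ →
      q (φ a₁ ξ₁) = q (φ a₂ ξ₂) := by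
    intro a₁ a₂ ξ₁ ξ₂ hA hX
    have hζ : ξ₁ - ξ₂ ∈ X.setR J := by
      rw [← hq_ker, q_sub, hX, sub_self]
    have hI' : a₁ - a₂ ∈ I := by
      rw [← hπA.ker, piA_sub, hA, sub_self]
    have hdec : φ a₁ ξ₁ - φ a₂ ξ₂ = φ a₁ (ξ₁ - ξ₂) + φ (a₁ - a₂) ξ₂ := by
      rw [phi_sub, phi_sub']; abel
    have h1 : q (φ a₁ (ξ₁ - ξ₂)) = 0 := claim0 _ _ hζ
    have h2 : q (φ (a₁ - a₂) ξ₂) = 0 := (hq_ker _).mpr (hIJ _ hI' ξ₂)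
    have h3 : q (φ a₁ ξ₁ - φ a₂ ξ₂) = 0 := by
      rw [hdec, hq_add, h1, h2, add_zero]
    rw [q_sub] at h3
    exact sub_eq_zero.mp h3
  -- definition of Φ
  set Φ : A' → Q.X → Q.X :=
    fun a' w => q (φ (hπA.surj a').choose (hq_surj w).choose) with hΦ
  have key : ∀ (a : A) (ξ : X.X), Φ (πA a) (q ξ) = q (φ a ξ) := fun a ξ =>
    welldef _ _ _ _ (hπA.surj (πA a)).choose_spec (hq_surj (q ξ)).choose_spec
  refine ⟨Φ, key, ?_, ?_, ?_, ?_, ?_, ?_⟩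
  · intro a' x y
    obtain ⟨a, rfl⟩ := hπA.surj a'
    obtain ⟨ξ, rfl⟩ := hq_surj x
    obtain ⟨η, rfl⟩ := hq_surj y
    rw [← hq_add, key, key, key, hφ_add, hq_add]
  · intro a' b' x
    obtain ⟨a, rfl⟩ := hπA.surj a'
    obtain ⟨b, rfl⟩ := hπA.surj b'
    obtain ⟨ξ, rfl⟩ := hq_surj x
    rw [← hπA.map_add, key, key, key, hφ_add', hq_add]
  · intro a' t x
    obtain ⟨a, rfl⟩ := hπA.surj a'
    obtain ⟨ξ, rfl⟩ := hq_surj x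
    rw [← hq_smul, key, key, hφ_smul, hq_smul]
  · intro a' b' x
    obtain ⟨a, rfl⟩ := hπA.surj a'
    obtain ⟨b, rfl⟩ := hπA.surj b'
    obtain ⟨ξ, rfl⟩ := hq_surj x
    rw [← hπA.map_mul, key, hφ_mul, key b ξ, key a (φ b ξ)]
  · intro a' x y
    obtain ⟨a, rfl⟩ := hπA.surj a'
    obtain ⟨ξ, rfl⟩ := hq_surj x
    obtain ⟨η, rfl⟩ := hq_surj y
    rw [key, ← hπA.map_star, key, hq_ip, hq_ip, hφ_adj]
  · -- compactness
    intro hcomp a' ε hε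
    obtain ⟨a, rfl⟩ := hπA.surj a'
    have qL_surj : Function.Surjective qL := fun w => hq_surj w
    obtain ⟨C, hC0, hC⟩ := ContinuousLinearMap.exists_preimage_norm_le qL qL_surj
    obtain ⟨n, ξf, ηf, hbnd⟩ := hcomp a (ε / C) (div_pos hε hC0)
    refine ⟨n, fun i => q (ξf i), fun i => q (ηf i), ?_⟩
    intro w
    obtain ⟨z, hz, hzn⟩ := hC w
    have hz' : q z = w := hz
    have e1 : Φ (πA a) w = q (φ a z) := by rw [← hz']; exact key a z
    have e2 : ∀ i : Fin n, Q.sm (q (ξf i)) (Q.ip (q (ηf i)) w) =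
        q (X.sm (ξf i) (X.ip (ηf i) z)) := by
      intro i; rw [← hz', hq_ip, hq_sm]
    have e3 : ∑ i, Q.sm (q (ξf i)) (Q.ip (q (ηf i)) w) =
        q (∑ i, X.sm (ξf i) (X.ip (ηf i) z)) := by
      rw [q_sum]; exact Finset.sum_congr rfl fun i _ => e2 i
    calc ‖Φ (πA a) w - ∑ i, Q.sm (q (ξf i)) (Q.ip (q (ηf i)) w)‖
        = ‖q (φ a z - ∑ i, X.sm (ξf i) (X.ip (ηf i) z))‖ := by
          rw [e1, e3, ← q_sub]
      _ ≤ ‖φ a z - ∑ i, X.sm (ξf i) (X.ip (ηf i) z)‖ := q_norm _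
      _ ≤ (ε / C) * ‖z‖ := hbnd z
      _ ≤ (ε / C) * (C * ‖w‖) := by
          exact mul_le_mul_of_nonneg_left hzn (le_of_lt (div_pos hε hC0))
      _ = ε * ‖w‖ := by field_simp
end
end
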